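/- For any Lagrangian subspaces Λ1, Π, Λ2 of a symplectic vector space Σ of dimension 2n, the Kashiwara index and the positive Maslov index are related by −Ki(Λ1, Π, Λ2) + 2·ind_Π(Λ1, Λ2) + dim(Λ1 ∩ Λ2) = n. -/

import Mathlib

open Module Submodule

/-- The skew-orthogonal complement (with respect to a bilinear form `σ`)
of a subspace `Γ`: all vectors `x` with `σ x y = 0` for all `y ∈ Γ`. -/
def skewCompl {E : Type*} [AddCommGroup E] [Module ℝ E]
    (σ : E →ₗ[ℝ] E →ₗ[ℝ] ℝ) (Γ : Submodule ℝ E) : Submodule ℝ E where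
  carrier := {x | ∀ y ∈ Γ, σ x y = 0}
  zero_mem' := by intro y hy; simp
  add_mem' := by
    intro a b ha hb y hy
    have h1 := ha y hy
    have h2 := hb y hy
    simp only [map_add, LinearMap.add_apply]
    rw [h1, h2, add_zero]
  smul_mem' := by
    intro c a ha y hy
    have h1 := ha y hy
    simp only [map_smul, LinearMap.smul_apply, smul_eq_mul]
    rw [h1, mul_zero]

/-- A subspace is Lagrangian if it coincides with its skew-orthogonal complement. -/
def IsLagrangian {E : Type*} [AddCommGroup E] [Module ℝ E]
    (σ : E →ₗ[ℝ] E →ₗ[ℝ] ℝ) (Λ : Submodule ℝ E) : Prop :=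
  Λ = skewCompl σ Λ

/-- The positive inertia index of the quadratic form `q` on `(Λ1 + Λ2) ∩ P` given by
`q (λ1 + λ2) = σ λ1 λ2` (`λi ∈ Λi`). -/
noncomputable def posIndPair {E : Type*} [AddCommGroup E] [Module ℝ E]
    (σ : E →ₗ[ℝ] E →ₗ[ℝ] ℝ) (P Λ1 Λ2 : Submodule ℝ E) : ℕ :=
  sSup {k | ∃ W : Submodule ℝ E, W ≤ (Λ1 ⊔ Λ2) ⊓ P ∧
    (∀ x ∈ W, x ≠ 0 → ∀ x1 ∈ Λ1, ∀ x2 ∈ Λ2, x = x1 + x2 → 0 < σ x1 x2) ∧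
    Module.finrank ℝ W = k}

/-- The negative inertia index of the same quadratic form. -/
noncomputable def negIndPair {E : Type*} [AddCommGroup E] [Module ℝ E]
    (σ : E →ₗ[ℝ] E →ₗ[ℝ] ℝ) (P Λ1 Λ2 : Submodule ℝ E) : ℕ :=
  sSup {k | ∃ W : Submodule ℝ E, W ≤ (Λ1 ⊔ Λ2) ⊓ P ∧
    (∀ x ∈ W, x ≠ 0 → ∀ x1 ∈ Λ1, ∀ x2 ∈ Λ2, x = x1 + x2 → σ x1 x2 < 0) ∧
    Module.finrank ℝ W = k}

/-- The positive Maslov index of the triple `(Λ1, P, Λ2)` of Lagrangian subspaces: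
`ind_P (Λ1, Λ2) = ind⁺ q + (dim (Λ1 ∩ P) + dim (Λ2 ∩ P)) / 2 - dim (Λ1 ∩ Λ2 ∩ P)`. -/
noncomputable def maslovInd {E : Type*} [AddCommGroup E] [Module ℝ E]
    (σ : E →ₗ[ℝ] E →ₗ[ℝ] ℝ) (P Λ1 Λ2 : Submodule ℝ E) : ℚ :=
  (posIndPair σ P Λ1 Λ2 : ℚ)
    + ((Module.finrank ℝ ↥(Λ1 ⊓ P) : ℚ) + (Module.finrank ℝ ↥(Λ2 ⊓ P) : ℚ)) / 2
    - (Module.finrank ℝ ↥(Λ1 ⊓ Λ2 ⊓ P) : ℚ)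

/-- The Kashiwara index of the triple `(Λ1, P, Λ2)`: the signature of the quadratic
form `q` on `(Λ1 + Λ2) ∩ P`. -/
noncomputable def kashiwara {E : Type*} [AddCommGroup E] [Module ℝ E]
    (σ : E →ₗ[ℝ] E →ₗ[ℝ] ℝ) (Λ1 P Λ2 : Submodule ℝ E) : ℤ :=
  (posIndPair σ P Λ1 Λ2 : ℤ) - (negIndPair σ P Λ1 Λ2 : ℤ)


set_option linter.unusedSectionVars false
set_option maxHeartbeats 1000000



/-- The subspace of `Fin k → ℝ` of vectors supported on `{j | p j}`. -/
def coordSpace {k : ℕ} (p : Fin k → Prop) [DecidablePred p] : Submodule ℝ (Fin k → ℝ) where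
  carrier := {c | ∀ j, ¬ p j → c j = 0}
  zero_mem' := by intro j _; rfl
  add_mem' := by intro a b ha hb j hj; simp [Pi.add_apply, ha j hj, hb j hj]
  smul_mem' := by intro r a ha j hj; simp [Pi.smul_apply, ha j hj]

lemma mem_coordSpace {k : ℕ} {p : Fin k → Prop} [DecidablePred p] {c : Fin k → ℝ} :
    c ∈ coordSpace p ↔ ∀ j, ¬ p j → c j = 0 := Iff.rfl

/-- The inclusion `({j // p j} → ℝ) →ₗ (Fin k → ℝ)` by extension by zero. -/
noncomputable def coordExt {k : ℕ} (p : Fin k → Prop) [DecidablePred p] :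
    ({j // p j} → ℝ) →ₗ[ℝ] (Fin k → ℝ) where
  toFun f := fun j => if h : p j then f ⟨j, h⟩ else 0
  map_add' f g := by ext j; by_cases h : p j <;> simp [h]
  map_smul' r f := by ext j; by_cases h : p j <;> simp [h]

lemma coordExt_injective {k : ℕ} (p : Fin k → Prop) [DecidablePred p] :
    Function.Injective (coordExt p) := by
  intro f g h
  ext ⟨j, hj⟩
  have := congrFun h j
  simpa [coordExt, hj] using this

lemma coordExt_range {k : ℕ} (p : Fin k → Prop) [DecidablePred p] :
    LinearMap.range (coordExt p) = coordSpace p := by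
  ext c
  constructor
  · rintro ⟨f, rfl⟩ j hj
    simp [coordExt, hj]
  · intro hc
    refine ⟨fun j => c j, ?_⟩
    ext j
    by_cases h : p j
    · simp [coordExt, h]
    · simp [coordExt, h, (hc j h).symm]

lemma finrank_coordSpace {k : ℕ} (p : Fin k → Prop) [DecidablePred p] :
    finrank ℝ ↥(coordSpace p) = (Finset.univ.filter p).card := by
  rw [← coordExt_range p, LinearMap.finrank_range_of_inj (coordExt_injective p),
    Module.finrank_fintype_fun_eq_card, Fintype.card_subtype]

section SkewFacts
variable {E : Type*} [AddCommGroup E] [Module ℝ E] [FiniteDimensional ℝ E]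
variable {σ : E →ₗ[ℝ] E →ₗ[ℝ] ℝ}

lemma mem_skewCompl {Γ : Submodule ℝ E} {x : E} :
    x ∈ skewCompl σ Γ ↔ ∀ y ∈ Γ, σ x y = 0 := Iff.rfl

lemma sigma_antisym (halt : ∀ x : E, σ x x = 0) (x y : E) : σ x y = - σ y x := by
  have h := halt (x + y)
  simp only [map_add, LinearMap.add_apply] at h
  rw [halt x, halt y] at h
  linarith

lemma sigma_refl (halt : ∀ x : E, σ x x = 0) : LinearMap.BilinForm.IsRefl σ := by
  intro x y h
  rw [sigma_antisym halt, h, neg_zero]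

lemma skewCompl_eq_orth (halt : ∀ x : E, σ x x = 0) (Γ : Submodule ℝ E) :
    skewCompl σ Γ = LinearMap.BilinForm.orthogonal σ Γ := by
  ext x
  rw [mem_skewCompl, LinearMap.BilinForm.mem_orthogonal_iff]
  constructor
  · intro h y hy
    exact sigma_refl halt x y (h y hy)
  · intro h y hy
    exact sigma_refl halt y x (h y hy)

variable (halt : ∀ x : E, σ x x = 0) (hnondeg : ∀ x : E, (∀ y : E, σ x y = 0) → x = 0)
include halt hnondeg

lemma finrank_skewCompl (Γ : Submodule ℝ E) :
    finrank ℝ ↥(skewCompl σ Γ) = finrank ℝ E - finrank ℝ Γ := by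
  rw [skewCompl_eq_orth halt]
  exact LinearMap.BilinForm.finrank_orthogonal
    ((LinearMap.IsRefl.nondegenerate_iff_separatingLeft (sigma_refl halt)).mpr hnondeg) Γ

lemma skewCompl_skewCompl (Γ : Submodule ℝ E) :
    skewCompl σ (skewCompl σ Γ) = Γ := by
  rw [skewCompl_eq_orth halt, skewCompl_eq_orth halt]
  exact LinearMap.BilinForm.orthogonal_orthogonal
    ((LinearMap.IsRefl.nondegenerate_iff_separatingLeft (sigma_refl halt)).mpr hnondeg) (sigma_refl halt) Γ

omit hnondeg in
lemma skewCompl_sup (Γ1 Γ2 : Submodule ℝ E) :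
    skewCompl σ (Γ1 ⊔ Γ2) = skewCompl σ Γ1 ⊓ skewCompl σ Γ2 := by
  ext x
  simp only [mem_inf, mem_skewCompl]
  constructor
  · intro h
    exact ⟨fun y hy => h y (le_sup_left (a := Γ1) hy),
           fun y hy => h y (le_sup_right (b := Γ2) hy)⟩
  · rintro ⟨h1, h2⟩ y hy
    rcases mem_sup.mp hy with ⟨a, ha, b, hb, rfl⟩
    rw [map_add, h1 a ha, h2 b hb, add_zero]

lemma skewCompl_inf (Γ1 Γ2 : Submodule ℝ E) :
    skewCompl σ (Γ1 ⊓ Γ2) = skewCompl σ Γ1 ⊔ skewCompl σ Γ2 := by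
  conv_lhs => rw [← skewCompl_skewCompl halt hnondeg Γ1, ← skewCompl_skewCompl halt hnondeg Γ2]
  rw [← skewCompl_sup halt]
  exact skewCompl_skewCompl halt hnondeg _

lemma finrank_add_finrank_skewCompl (Γ : Submodule ℝ E) :
    finrank ℝ Γ + finrank ℝ ↥(skewCompl σ Γ) = finrank ℝ E := by
  rw [finrank_skewCompl halt hnondeg]
  have : finrank ℝ Γ ≤ finrank ℝ E := Submodule.finrank_le Γ
  omega

end SkewFacts

section GenInd
variable {E : Type*} [AddCommGroup E] [Module ℝ E] [FiniteDimensional ℝ E]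


lemma ind_eq (V : Submodule ℝ E) (g : E → ℝ) {m : ℕ} (φ : ↥V ≃ₗ[ℝ] (Fin m → ℝ))
    (w : Fin m → ℝ) (hw : ∀ j, w j = -1 ∨ w j = 0 ∨ w j = 1)
    (hq : ∀ v : ↥V, g ↑v = ∑ j, w j * (φ v j * φ v j)) :
    sSup {k | ∃ W : Submodule ℝ E, W ≤ V ∧ (∀ x ∈ W, x ≠ 0 → 0 < g x) ∧ finrank ℝ ↥W = k}
      = (Finset.univ.filter (fun j => w j = 1)).card := by
  classical
  set ψ : (Fin m → ℝ) →ₗ[ℝ] E := V.subtype ∘ₗ (φ.symm : (Fin m → ℝ) ≃ₗ[ℝ] ↥V).toLinearMap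
    with hψdef
  have hψinj : Function.Injective ψ := V.injective_subtype.comp φ.symm.injective
  have hψV : ∀ c, ψ c ∈ V := fun c => (φ.symm c).2
  have hgψ : ∀ c, g (ψ c) = ∑ j, w j * (c j * c j) := by
    intro c
    have := hq (φ.symm c)
    simpa [hψdef, LinearEquiv.apply_symm_apply] using this
  have hrank : ∀ (p : Fin m → Prop) [DecidablePred p],
      finrank ℝ ↥(Submodule.map ψ (coordSpace p)) = (Finset.univ.filter p).card := by
    intro p hp
    rw [← (Submodule.equivMapOfInjective ψ hψinj (coordSpace p)).finrank_eq]
    exact finrank_coordSpace p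
  set S := {k | ∃ W : Submodule ℝ E, W ≤ V ∧ (∀ x ∈ W, x ≠ 0 → 0 < g x) ∧ finrank ℝ ↥W = k}
    with hSdef
  have hmem : (Finset.univ.filter (fun j => w j = 1)).card ∈ S := by
    refine ⟨Submodule.map ψ (coordSpace (fun j => w j = 1)), ?_, ?_, hrank _⟩
    · rintro x ⟨c, hc, rfl⟩
      exact hψV c
    · rintro x ⟨c, hc, rfl⟩ hx0
      have hc0 : c ≠ 0 := fun h => hx0 (by rw [h, map_zero])
      rw [hgψ]
      obtain ⟨j0, hj0⟩ := Function.ne_iff.mp hc0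
      have hwj0 : w j0 = 1 := by
        by_contra h
        exact hj0 (hc j0 h)
      refine Finset.sum_pos' ?_ ⟨j0, Finset.mem_univ _, ?_⟩
      · intro j _
        by_cases h : w j = 1
        · rw [h, one_mul]; exact mul_self_nonneg _
        · rw [hc j h]; simp
      · rw [hwj0, one_mul]
        have : c j0 ≠ 0 := fun h => hj0 (by simp [h])
        exact mul_self_pos.mpr this
  have hub : ∀ k ∈ S, k ≤ (Finset.univ.filter (fun j => w j = 1)).card := by
    rintro k ⟨W, hWV, hWpos, rfl⟩
    by_contra hlt
    push_neg at hlt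
    set N := Submodule.map ψ (coordSpace (fun j => ¬ w j = 1)) with hNdef
    have hNV : N ≤ V := by rintro x ⟨c, hc, rfl⟩; exact hψV c
    have hNrank : finrank ℝ ↥N = (Finset.univ.filter (fun j => ¬ w j = 1)).card := hrank _
    have hdim := Submodule.finrank_sup_add_finrank_inf_eq W N
    have hsup : finrank ℝ ↥(W ⊔ N) ≤ finrank ℝ ↥V :=
      Submodule.finrank_mono (sup_le hWV hNV)
    have hVm : finrank ℝ ↥V = m := by
      rw [φ.finrank_eq, Module.finrank_fintype_fun_eq_card, Fintype.card_fin]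
    have hcards : (Finset.univ.filter (fun j => w j = 1)).card
        + (Finset.univ.filter (fun j => ¬ w j = 1)).card = m := by
      rw [Finset.card_filter_add_card_filter_not, Finset.card_univ, Fintype.card_fin]
    have hpos : 0 < finrank ℝ ↥(W ⊓ N) := by omega
    have hnebot : W ⊓ N ≠ ⊥ := by
      intro h
      rw [h, finrank_bot] at hpos
      exact lt_irrefl 0 hpos
    obtain ⟨x, hx, hx0⟩ := Submodule.ne_bot_iff _ |>.mp hnebot
    have h1 : 0 < g x := hWpos x hx.1 hx0
    have h2 : g x ≤ 0 := by
      rcases hx.2 with ⟨c, hc, rfl⟩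
      rw [hgψ]
      refine Finset.sum_nonpos ?_
      intro j _
      by_cases h : w j = 1
      · rw [hc j (by simpa using h)]
        simp
      · rcases hw j with h' | h' | h'
        · rw [h']
          nlinarith [mul_self_nonneg (c j)]
        · rw [h']; simp
        · exact absurd h' h
    linarith
  have hne : S.Nonempty := by
    refine ⟨0, ⊥, bot_le, ?_, finrank_bot ℝ E⟩
    intro x hx hx0
    exact absurd (Submodule.mem_bot ℝ |>.mp hx) hx0
  have hbdd : BddAbove S := by
    refine ⟨finrank ℝ E, ?_⟩
    rintro k ⟨W, _, _, rfl⟩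
    exact Submodule.finrank_le W
  exact le_antisymm (csSup_le hne hub) (le_csSup hbdd hmem)

lemma rad_eq (V : Submodule ℝ E) {m : ℕ} (φ : ↥V ≃ₗ[ℝ] (Fin m → ℝ))
    (w : Fin m → ℝ) (Sb : E →ₗ[ℝ] E →ₗ[ℝ] ℝ)
    (hpolar : ∀ v u : ↥V, Sb ↑v ↑u = ∑ j, w j * (2 * φ v j * φ u j))
    (R : Submodule ℝ E) (hR : ∀ x, x ∈ R ↔ x ∈ V ∧ ∀ y ∈ V, Sb x y = 0) :
    finrank ℝ ↥R = (Finset.univ.filter (fun j => w j = 0)).card := by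
  classical
  set ψ : (Fin m → ℝ) →ₗ[ℝ] E := V.subtype ∘ₗ (φ.symm : (Fin m → ℝ) ≃ₗ[ℝ] ↥V).toLinearMap
    with hψdef
  have hψinj : Function.Injective ψ := V.injective_subtype.comp φ.symm.injective
  have hψV : ∀ c, ψ c ∈ V := fun c => (φ.symm c).2
  have hRmap : R = Submodule.map ψ (coordSpace (fun j => w j = 0)) := by
    ext x
    rw [hR]
    constructor
    · rintro ⟨hxV, hxS⟩
      refine ⟨φ ⟨x, hxV⟩, ?_, ?_⟩
      · intro j hj
        have hy : (↑(φ.symm (Pi.single j 1)) : E) ∈ V := (φ.symm (Pi.single j 1)).2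
        have := hxS _ hy
        rw [show x = ((⟨x, hxV⟩ : ↥V) : E) from rfl] at this
        rw [hpolar ⟨x, hxV⟩ (φ.symm (Pi.single j 1))] at this
        rw [LinearEquiv.apply_symm_apply] at this
        rw [Finset.sum_eq_single j (fun i _ hij => by
          rw [Pi.single_eq_of_ne hij]; ring) (fun h => absurd (Finset.mem_univ j) h)] at this
        rw [Pi.single_eq_same] at this
        rcases mul_eq_zero.mp this with h | h
        · exact absurd h hj
        · linarith
      · show ψ (φ ⟨x, hxV⟩) = x
        simp [hψdef]
    · rintro ⟨c, hc, rfl⟩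
      refine ⟨hψV c, ?_⟩
      intro y hy
      have hxeq : ψ c = ((φ.symm c : ↥V) : E) := rfl
      rw [hxeq, show y = ((⟨y, hy⟩ : ↥V) : E) from rfl, hpolar (φ.symm c) ⟨y, hy⟩]
      refine Finset.sum_eq_zero ?_
      intro j _
      by_cases h : w j = 0
      · rw [h, zero_mul]
      · rw [LinearEquiv.apply_symm_apply, hc j h]
        ring
  rw [hRmap, ← (Submodule.equivMapOfInjective ψ hψinj _).finrank_eq]
  exact finrank_coordSpace _
end GenInd



lemma exists_proj {E : Type*} [AddCommGroup E] [Module ℝ E] (Λ1 Λ2 : Submodule ℝ E) :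
    ∃ π' : E →ₗ[ℝ] E, (∀ x, π' x ∈ Λ1) ∧ (∀ x ∈ Λ1, π' x = x) ∧
      (∀ x ∈ Λ1 ⊔ Λ2, x - π' x ∈ Λ2) := by
  classical
  obtain ⟨C', hC'⟩ := Submodule.exists_isCompl ((Λ1 ⊓ Λ2).comap Λ2.subtype)
  set C : Submodule ℝ E := C'.map Λ2.subtype with hCdef
  have hCΛ2 : C ≤ Λ2 := by
    rintro x ⟨c, _, rfl⟩; exact c.2
  have hsupC : C ⊔ (Λ1 ⊓ Λ2) = Λ2 := by
    have h1 : C'.map Λ2.subtype ⊔ ((Λ1 ⊓ Λ2).comap Λ2.subtype).map Λ2.subtype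
        = (C' ⊔ (Λ1 ⊓ Λ2).comap Λ2.subtype).map Λ2.subtype := (Submodule.map_sup _ _ _).symm
    rw [hC'.symm.codisjoint.eq_top] at h1
    rw [Submodule.map_comap_subtype] at h1
    rw [Submodule.map_top, Submodule.range_subtype] at h1
    rw [inf_eq_right.mpr (inf_le_right : Λ1 ⊓ Λ2 ≤ Λ2)] at h1
    exact h1
  have hCΛ1 : C ⊓ Λ1 = ⊥ := by
    rw [eq_bot_iff]
    rintro x ⟨hxC, hxΛ1⟩
    rcases hxC with ⟨c, hc, rfl⟩
    have hmem : c ∈ (Λ1 ⊓ Λ2).comap Λ2.subtype := by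
      exact ⟨hxΛ1, c.2⟩
    have : c ∈ (Λ1 ⊓ Λ2).comap Λ2.subtype ⊓ C' := ⟨hmem, hc⟩
    rw [hC'.inf_eq_bot, Submodule.mem_bot] at this
    simp [this, Submodule.mem_bot]
  obtain ⟨D, hD⟩ := Submodule.exists_isCompl (Λ1 ⊔ Λ2)
  set C₂ : Submodule ℝ E := C ⊔ D with hC₂def
  have hcompl : IsCompl Λ1 C₂ := by
    constructor
    · rw [disjoint_iff]
      rw [eq_bot_iff]
      rintro x ⟨hxΛ1, hxC₂⟩
      rcases Submodule.mem_sup.mp hxC₂ with ⟨c, hc, d, hd, rfl⟩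
      have hdmem : d ∈ (Λ1 ⊔ Λ2) ⊓ D := by
        constructor
        · have : (c + d) - c ∈ Λ1 ⊔ Λ2 :=
            Submodule.sub_mem _ (le_sup_left (a := Λ1) hxΛ1)
              (le_sup_right (b := Λ2) (hCΛ2 hc))
          simpa using this
        · exact hd
      rw [hD.inf_eq_bot] at hdmem
      rw [Submodule.mem_bot] at hdmem
      subst hdmem
      have : c + 0 ∈ C ⊓ Λ1 := ⟨by simpa using hc, hxΛ1⟩
      rw [hCΛ1] at this
      simpa using this
    · rw [codisjoint_iff]
      have h1 : Λ1 ⊔ C₂ = (Λ1 ⊔ C) ⊔ D := by rw [hC₂def, sup_assoc]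
      have h2 : Λ2 ≤ Λ1 ⊔ C := by
        rw [← hsupC]
        exact sup_le (le_sup_right) (le_trans inf_le_left le_sup_left)
      have h3 : Λ1 ⊔ Λ2 ≤ Λ1 ⊔ C := sup_le le_sup_left h2
      rw [h1, eq_top_iff, ← hD.codisjoint.eq_top]
      exact sup_le (le_trans h3 le_sup_left) le_sup_right
  set π : E →ₗ[ℝ] ↥Λ1 := Λ1.projectionOnto C₂ hcompl with hπdef
  refine ⟨Λ1.subtype ∘ₗ π, fun x => (π x).2, ?_, ?_⟩
  · intro x hx
    have := Submodule.projectionOnto_apply_left hcompl ⟨x, hx⟩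
    simp only [LinearMap.comp_apply, hπdef]
    rw [this]
    rfl
  · intro x hx
    simp only [LinearMap.comp_apply]
    -- x - π' x ∈ C₂, and C₂ ⊓ (Λ1 ⊔ Λ2) ≤ Λ2 via C
    have hxd : x - Λ1.subtype (π x) ∈ C₂ := by
      obtain ⟨a, b, ha, hb, hab⟩ : ∃ a b, a ∈ Λ1 ∧ b ∈ C₂ ∧ x = a + b := by
        have : x ∈ Λ1 ⊔ C₂ := by rw [hcompl.codisjoint.eq_top]; trivial
        rcases Submodule.mem_sup.mp this with ⟨a, ha, b, hb, h⟩
        exact ⟨a, b, ha, hb, h.symm⟩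
      have hπx : π x = ⟨a, ha⟩ := by
        rw [hab]
        rw [map_add]
        rw [Submodule.projectionOnto_apply_left hcompl ⟨a, ha⟩,
          Submodule.projectionOnto_apply_right hcompl ⟨b, hb⟩]
        simp
      rw [hπx, hab]
      simpa using hb
    have hsub : x - Λ1.subtype (π x) ∈ Λ1 ⊔ Λ2 :=
      Submodule.sub_mem _ hx (le_sup_left (a := Λ1) (π x).2)
    rcases Submodule.mem_sup.mp hxd with ⟨c, hc, d, hd, hcd⟩
    have hdmem : d ∈ (Λ1 ⊔ Λ2) ⊓ D := by
      refine ⟨?_, hd⟩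
      have : (x - Λ1.subtype (π x)) - c ∈ Λ1 ⊔ Λ2 :=
        Submodule.sub_mem _ hsub (le_sup_right (b := Λ2) (hCΛ2 hc))
      rw [← hcd] at this
      simpa using this
    rw [hD.inf_eq_bot, Submodule.mem_bot] at hdmem
    subst hdmem
    rw [add_zero] at hcd
    rw [hcd] at hc
    exact hCΛ2 hc


/- STATEMENT 14 -/
theorem stmt_14 {E : Type*} [AddCommGroup E] [Module ℝ E] [FiniteDimensional ℝ E]
    {n : ℕ} (σ : E →ₗ[ℝ] E →ₗ[ℝ] ℝ)
    (halt : ∀ x : E, σ x x = 0)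
    (hnondeg : ∀ x : E, (∀ y : E, σ x y = 0) → x = 0)
    (hdim : Module.finrank ℝ E = 2 * n)
    (P Λ1 Λ2 : Submodule ℝ E)
    (hP : IsLagrangian σ P) (hΛ1 : IsLagrangian σ Λ1) (hΛ2 : IsLagrangian σ Λ2) :
    -(kashiwara σ Λ1 P Λ2 : ℚ) + 2 * maslovInd σ P Λ1 Λ2
      + (Module.finrank ℝ ↥(Λ1 ⊓ Λ2) : ℚ) = (n : ℚ) := by
  classical
  have hiso : ∀ (Λ : Submodule ℝ E), IsLagrangian σ Λ → ∀ u ∈ Λ, ∀ v ∈ Λ, σ u v = 0 := by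
    intro Λ hΛ u hu v hv
    rw [hΛ] at hu
    exact hu v hv
  have hiso1 := hiso Λ1 hΛ1
  have hiso2 := hiso Λ2 hΛ2
  have hisoP := hiso P hP
  have hrankL : ∀ (Λ : Submodule ℝ E), IsLagrangian σ Λ → finrank ℝ Λ = n := by
    intro Λ hΛ
    have h := finrank_add_finrank_skewCompl halt hnondeg Λ
    rw [← hΛ, hdim] at h
    omega
  obtain ⟨π', hπ1, hπid, hπ2⟩ := exists_proj Λ1 Λ2
  set V : Submodule ℝ E := (Λ1 ⊔ Λ2) ⊓ P with hVdef
  have hVP : V ≤ P := inf_le_right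
  have hV12 : V ≤ Λ1 ⊔ Λ2 := inf_le_left
  -- well-definedness of the quadratic form
  have hL1 : ∀ x ∈ Λ1 ⊔ Λ2, ∀ x1 ∈ Λ1, ∀ x2 ∈ Λ2, x = x1 + x2 → σ x1 x2 = σ (π' x) x := by
    intro x hx x1 hx1 x2 hx2 hsum
    have hcΛ2 : x - π' x ∈ Λ2 := hπ2 x hx
    have hd1 : x1 - π' x ∈ Λ1 := Submodule.sub_mem _ hx1 (hπ1 x)
    have hd2 : x1 - π' x ∈ Λ2 := by
      have h : x1 - π' x = (x - π' x) - x2 := by rw [hsum]; abel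
      rw [h]; exact Submodule.sub_mem _ hcΛ2 hx2
    have z1 : σ (π' x) (x1 - π' x) = 0 := hiso1 _ (hπ1 x) _ hd1
    have z2 : σ (x1 - π' x) (x - π' x) = 0 := hiso2 _ hd2 _ hcΛ2
    have z3 : σ (x1 - π' x) (x1 - π' x) = 0 := halt _
    have z4 : σ (π' x) (π' x) = 0 := halt _
    have hx1e : x1 = π' x + (x1 - π' x) := by abel
    have hx2e : x2 = (x - π' x) - (x1 - π' x) := by rw [hsum]; abel
    calc σ x1 x2 = σ (π' x + (x1 - π' x)) ((x - π' x) - (x1 - π' x)) := by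
          rw [← hx1e, ← hx2e]
      _ = σ (π' x) (x - π' x) - σ (π' x) (x1 - π' x)
            + (σ (x1 - π' x) (x - π' x) - σ (x1 - π' x) (x1 - π' x)) := by
          simp only [map_add, map_sub, LinearMap.add_apply, LinearMap.sub_apply]; ring
      _ = σ (π' x) (x - π' x) := by rw [z1, z2, z3]; ring
      _ = σ (π' x) x := by rw [map_sub, z4, sub_zero]
  set g : E → ℝ := fun x => σ (π' x) x with hgdef
  set Q : QuadraticForm ℝ E := LinearMap.BilinMap.toQuadraticMap (σ ∘ₗ π') with hQdef
  set QV : QuadraticForm ℝ ↥V := Q.comp V.subtype with hQVdef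
  obtain ⟨w, hw, hequiv⟩ := QuadraticForm.equivalent_one_zero_neg_one_weighted_sum_squared QV
  obtain ⟨f⟩ := hequiv
  set φ := f.toLinearEquiv with hφdef
  have hfapp : ∀ v : ↥V, QuadraticMap.weightedSumSquares ℝ w (φ v) = QV v :=
    fun v => f.map_app v
  have hq : ∀ v : ↥V, g ↑v = ∑ j, w j * (φ v j * φ v j) := by
    intro v
    have h := (hfapp v).symm
    rw [QuadraticMap.weightedSumSquares_apply] at h
    have h2 : QV v = g ↑v := rfl
    rw [h2] at h
    simpa [smul_eq_mul] using h
  -- positive index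
  have hpos : posIndPair σ P Λ1 Λ2 = (Finset.univ.filter (fun j => w j = 1)).card := by
    unfold posIndPair
    have hset : {k | ∃ W : Submodule ℝ E, W ≤ (Λ1 ⊔ Λ2) ⊓ P ∧
        (∀ x ∈ W, x ≠ 0 → ∀ x1 ∈ Λ1, ∀ x2 ∈ Λ2, x = x1 + x2 → 0 < σ x1 x2) ∧
        Module.finrank ℝ W = k}
        = {k | ∃ W : Submodule ℝ E, W ≤ V ∧ (∀ x ∈ W, x ≠ 0 → 0 < g x) ∧
            finrank ℝ ↥W = k} := by
      ext k
      constructor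
      · rintro ⟨W, hWV, hWpos, rfl⟩
        refine ⟨W, hWV, ?_, rfl⟩
        intro x hx hx0
        have hx12 : x ∈ Λ1 ⊔ Λ2 := hV12 (hWV hx)
        have h := hWpos x hx hx0 (π' x) (hπ1 x) (x - π' x) (hπ2 x hx12) (by abel)
        rwa [hL1 x hx12 (π' x) (hπ1 x) (x - π' x) (hπ2 x hx12) (by abel)] at h
      · rintro ⟨W, hWV, hWpos, rfl⟩
        refine ⟨W, hWV, ?_, rfl⟩
        intro x hx hx0 x1 hx1 x2 hx2 hsum
        rw [hL1 x (hV12 (hWV hx)) x1 hx1 x2 hx2 hsum]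
        exact hWpos x hx hx0
    rw [hset]
    exact ind_eq V g φ w hw hq
  -- negative index
  have hw' : ∀ j, (-w) j = -1 ∨ (-w) j = 0 ∨ (-w) j = 1 := by
    intro j
    rcases hw j with h | h | h <;> simp [h]
  have hq' : ∀ v : ↥V, -(g ↑v) = ∑ j, (-w) j * (φ v j * φ v j) := by
    intro v
    rw [hq v, ← Finset.sum_neg_distrib]
    refine Finset.sum_congr rfl fun j _ => ?_
    simp only [Pi.neg_apply]
    ring
  have hneg : negIndPair σ P Λ1 Λ2 = (Finset.univ.filter (fun j => w j = -1)).card := by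
    unfold negIndPair
    have hset : {k | ∃ W : Submodule ℝ E, W ≤ (Λ1 ⊔ Λ2) ⊓ P ∧
        (∀ x ∈ W, x ≠ 0 → ∀ x1 ∈ Λ1, ∀ x2 ∈ Λ2, x = x1 + x2 → σ x1 x2 < 0) ∧
        Module.finrank ℝ W = k}
        = {k | ∃ W : Submodule ℝ E, W ≤ V ∧ (∀ x ∈ W, x ≠ 0 → 0 < -(g x)) ∧
            finrank ℝ ↥W = k} := by
      ext k
      constructor
      · rintro ⟨W, hWV, hWpos, rfl⟩
        refine ⟨W, hWV, ?_, rfl⟩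
        intro x hx hx0
        have hx12 : x ∈ Λ1 ⊔ Λ2 := hV12 (hWV hx)
        have h := hWpos x hx hx0 (π' x) (hπ1 x) (x - π' x) (hπ2 x hx12) (by abel)
        rw [hL1 x hx12 (π' x) (hπ1 x) (x - π' x) (hπ2 x hx12) (by abel)] at h
        linarith
      · rintro ⟨W, hWV, hWpos, rfl⟩
        refine ⟨W, hWV, ?_, rfl⟩
        intro x hx hx0 x1 hx1 x2 hx2 hsum
        rw [hL1 x (hV12 (hWV hx)) x1 hx1 x2 hx2 hsum]
        have := hWpos x hx hx0
        linarith
    rw [hset]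
    have h := ind_eq V (fun x => -(g x)) φ (-w) hw' hq'
    rw [h]
    congr 1
    refine Finset.filter_congr fun j _ => ?_
    simp only [Pi.neg_apply]
    constructor
    · intro h'; linarith
    · intro h'; rw [h']; ring
  -- the polar bilinear form and its radical
  set Sb : E →ₗ[ℝ] E →ₗ[ℝ] ℝ := σ ∘ₗ π' + (σ ∘ₗ π').flip with hSbdef
  have hSbapp : ∀ x y : E, Sb x y = σ (π' x) y + σ (π' y) x := fun x y => rfl
  have hpolar : ∀ v u : ↥V, Sb ↑v ↑u = ∑ j, w j * (2 * φ v j * φ u j) := by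
    intro v u
    have hkey : Sb ↑v ↑u = g ↑(v + u) - g ↑v - g ↑u := by
      rw [hSbapp]
      show σ (π' ↑v) ↑u + σ (π' ↑u) ↑v
        = σ (π' (↑v + ↑u)) (↑v + ↑u) - σ (π' ↑v) ↑v - σ (π' ↑u) ↑u
      simp only [map_add, LinearMap.add_apply]
      ring
    rw [hkey, hq, hq, hq, ← Finset.sum_sub_distrib, ← Finset.sum_sub_distrib]
    refine Finset.sum_congr rfl fun j _ => ?_
    have hφ : φ (v + u) j = φ v j + φ u j := by rw [map_add]; rfl
    rw [hφ]; ring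
  set R : Submodule ℝ E := V ⊓ LinearMap.ker (Sb.compl₂ V.subtype) with hRdef
  have hR : ∀ x, x ∈ R ↔ x ∈ V ∧ ∀ y ∈ V, Sb x y = 0 := by
    intro x
    rw [hRdef, Submodule.mem_inf, LinearMap.mem_ker]
    constructor
    · rintro ⟨h1, h2⟩
      refine ⟨h1, fun y hy => ?_⟩
      have h3 := LinearMap.congr_fun h2 (⟨y, hy⟩ : ↥V)
      simpa using h3
    · rintro ⟨h1, h2⟩
      refine ⟨h1, ?_⟩
      ext y
      simpa using h2 y.1 y.2
  have hc0 : finrank ℝ ↥R = (Finset.univ.filter (fun j => w j = 0)).card :=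
    rad_eq V φ w Sb hpolar R hR
  -- geometric identification of the radical
  have hVskew : skewCompl σ V = (Λ1 ⊓ Λ2) ⊔ P := by
    rw [hVdef, skewCompl_inf halt hnondeg, skewCompl_sup halt, ← hΛ1, ← hΛ2, ← hP]
  have hRsup : R = (Λ1 ⊓ P) ⊔ (Λ2 ⊓ P) := by
    apply le_antisymm
    · intro x hx
      rw [hR] at hx
      obtain ⟨hxV, hxS⟩ := hx
      have hx12 : x ∈ Λ1 ⊔ Λ2 := hV12 hxV
      have hxP : x ∈ P := hVP hxV
      have haΛ1 : π' x ∈ Λ1 := hπ1 x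
      have hcΛ2 : x - π' x ∈ Λ2 := hπ2 x hx12
      have hskew : π' x - (x - π' x) ∈ skewCompl σ V := by
        intro y hy
        have hy12 : y ∈ Λ1 ⊔ Λ2 := hV12 hy
        have h0 := hxS y hy
        rw [hSbapp] at h0
        have e1 : σ (x - π' x) (y - π' y) = 0 := hiso2 _ hcΛ2 _ (hπ2 y hy12)
        have e2 : σ (π' y) (π' x) = 0 := hiso1 _ (hπ1 y) _ haΛ1
        have e3 : σ (x - π' x) (π' y) = - σ (π' y) (x - π' x) := sigma_antisym halt _ _
        have ex1 : σ (π' x - (x - π' x)) y = σ (π' x) y - σ (x - π' x) y := by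
          rw [map_sub, LinearMap.sub_apply]
        have ex2 : σ (x - π' x) y = σ (x - π' x) (π' y) + σ (x - π' x) (y - π' y) := by
          rw [← map_add]; congr 1; abel
        have ex3 : σ (π' y) (x - π' x) = σ (π' y) x - σ (π' y) (π' x) := map_sub _ _ _
        linarith
      rw [hVskew] at hskew
      rcases Submodule.mem_sup.mp hskew with ⟨d, hd, p, hp, hdp⟩
      refine Submodule.mem_sup.mpr
        ⟨π' x - (1/2 : ℝ) • d, ?_, (x - π' x) + (1/2 : ℝ) • d, ?_, by abel⟩
      · refine Submodule.mem_inf.mpr ⟨Submodule.sub_mem _ haΛ1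
          (Submodule.smul_mem _ _ (Submodule.mem_inf.mp hd).1), ?_⟩
        have hpx : π' x - (1/2 : ℝ) • d = (1/2 : ℝ) • (p + x) := by
          have hpe : p = π' x - (x - π' x) - d := by rw [← hdp]; abel
          rw [hpe]
          module
        rw [hpx]
        exact Submodule.smul_mem _ _ (Submodule.add_mem _ hp hxP)
      · refine Submodule.mem_inf.mpr ⟨Submodule.add_mem _ hcΛ2
          (Submodule.smul_mem _ _ (Submodule.mem_inf.mp hd).2), ?_⟩
        have htx : (x - π' x) + (1/2 : ℝ) • d = (1/2 : ℝ) • (x - p) := by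
          have hpe : p = π' x - (x - π' x) - d := by rw [← hdp]; abel
          rw [hpe]
          module
        rw [htx]
        exact Submodule.smul_mem _ _ (Submodule.sub_mem _ hxP hp)
    · refine sup_le ?_ ?_
      · rintro x hx
        obtain ⟨hx1, hxP⟩ := Submodule.mem_inf.mp hx
        rw [hR]
        have hxV : x ∈ V := Submodule.mem_inf.mpr ⟨Submodule.mem_sup_left hx1, hxP⟩
        refine ⟨hxV, fun y hy => ?_⟩
        rw [hSbapp, hπid x hx1]
        have h1 : σ x y = 0 := hisoP x hxP y (hVP hy)
        have h2 : σ (π' y) x = 0 := hiso1 _ (hπ1 y) x hx1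
        linarith
      · rintro x hx
        obtain ⟨hx2, hxP⟩ := Submodule.mem_inf.mp hx
        rw [hR]
        have hx12 : x ∈ Λ1 ⊔ Λ2 := Submodule.mem_sup_right hx2
        have hxV : x ∈ V := Submodule.mem_inf.mpr ⟨hx12, hxP⟩
        refine ⟨hxV, fun y hy => ?_⟩
        rw [hSbapp]
        have haΛ2 : π' x ∈ Λ2 := by
          have h : π' x = x - (x - π' x) := by abel
          rw [h]; exact Submodule.sub_mem _ hx2 (hπ2 x hx12)
        have hy12 := hV12 hy
        have h1 : σ (π' x) (π' y) = 0 := hiso1 _ (hπ1 x) _ (hπ1 y)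
        have h2 : σ (π' x) (y - π' y) = 0 := hiso2 _ haΛ2 _ (hπ2 y hy12)
        have h3 : σ x y = 0 := hisoP x hxP y (hVP hy)
        have h4 : σ x (y - π' y) = 0 := hiso2 x hx2 _ (hπ2 y hy12)
        have e1 : σ (π' x) y = σ (π' x) (π' y) + σ (π' x) (y - π' y) := by
          rw [← map_add]; congr 1; abel
        have e2 : σ x (π' y) = σ x y - σ x (y - π' y) := by
          rw [← map_sub]; congr 1; abel
        have e3 : σ (π' y) x = - σ x (π' y) := sigma_antisym halt _ _
        linarith
  -- dimension identities
  have hA1 : finrank ℝ ↥(Λ1 ⊔ Λ2) + finrank ℝ ↥(Λ1 ⊓ Λ2) = 2 * n := by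
    rw [Submodule.finrank_sup_add_finrank_inf_eq, hrankL Λ1 hΛ1, hrankL Λ2 hΛ2]
    ring
  have hA2 : finrank ℝ ↥((Λ1 ⊔ Λ2) ⊔ P) + finrank ℝ ↥V = finrank ℝ ↥(Λ1 ⊔ Λ2) + n := by
    rw [hVdef, Submodule.finrank_sup_add_finrank_inf_eq, hrankL P hP]
  have hA3 : finrank ℝ ↥((Λ1 ⊔ Λ2) ⊔ P) + finrank ℝ ↥(Λ1 ⊓ Λ2 ⊓ P) = 2 * n := by
    have h := finrank_add_finrank_skewCompl halt hnondeg ((Λ1 ⊔ Λ2) ⊔ P)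
    rw [skewCompl_sup halt, skewCompl_sup halt, ← hΛ1, ← hΛ2, ← hP, hdim] at h
    exact h
  have hA4 : finrank ℝ ↥((Λ1 ⊓ P) ⊔ (Λ2 ⊓ P)) + finrank ℝ ↥(Λ1 ⊓ Λ2 ⊓ P)
      = finrank ℝ ↥(Λ1 ⊓ P) + finrank ℝ ↥(Λ2 ⊓ P) := by
    have hinf : (Λ1 ⊓ P) ⊓ (Λ2 ⊓ P) = Λ1 ⊓ Λ2 ⊓ P := by
      ext x
      simp only [Submodule.mem_inf]
      tauto
    rw [← hinf, Submodule.finrank_sup_add_finrank_inf_eq]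
  have hcount : (Finset.univ.filter (fun j => w j = 1)).card
      + (Finset.univ.filter (fun j => w j = -1)).card
      + (Finset.univ.filter (fun j => w j = 0)).card = finrank ℝ ↥V := by
    rw [Finset.card_filter, Finset.card_filter, Finset.card_filter,
      ← Finset.sum_add_distrib, ← Finset.sum_add_distrib]
    have hone : ∀ j ∈ Finset.univ, ((if w j = 1 then 1 else 0)
        + (if w j = -1 then 1 else 0)) + (if w j = 0 then 1 else 0) = 1 := by
      intro j _
      rcases hw j with h | h | h <;> norm_num [h]
    rw [Finset.sum_congr rfl hone, Finset.sum_const, smul_eq_mul, mul_one,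
      Finset.card_univ, Fintype.card_fin]
  -- final arithmetic
  have hE2 : finrank ℝ ↥R + finrank ℝ ↥(Λ1 ⊓ Λ2 ⊓ P)
      = finrank ℝ ↥(Λ1 ⊓ P) + finrank ℝ ↥(Λ2 ⊓ P) := by
    rw [hRsup]; exact hA4
  rw [kashiwara, maslovInd, hpos, hneg]
  have hQ1 : ((Finset.univ.filter (fun j => w j = 1)).card : ℚ)
      + ((Finset.univ.filter (fun j => w j = -1)).card : ℚ)
      + ((Finset.univ.filter (fun j => w j = 0)).card : ℚ) = (finrank ℝ ↥V : ℚ) := by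
    exact_mod_cast congrArg (Nat.cast : ℕ → ℚ) hcount
  have hQ2 : ((Finset.univ.filter (fun j => w j = 0)).card : ℚ)
      + (finrank ℝ ↥(Λ1 ⊓ Λ2 ⊓ P) : ℚ)
      = (finrank ℝ ↥(Λ1 ⊓ P) : ℚ) + (finrank ℝ ↥(Λ2 ⊓ P) : ℚ) := by
    rw [← hc0]
    exact_mod_cast congrArg (Nat.cast : ℕ → ℚ) hE2
  have hQ3 : (finrank ℝ ↥V : ℚ) + (finrank ℝ ↥(Λ1 ⊓ Λ2) : ℚ)
      = (n : ℚ) + (finrank ℝ ↥(Λ1 ⊓ Λ2 ⊓ P) : ℚ) := by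
    have h : finrank ℝ ↥V + finrank ℝ ↥(Λ1 ⊓ Λ2)
        = n + finrank ℝ ↥(Λ1 ⊓ Λ2 ⊓ P) := by omega
    exact_mod_cast congrArg (Nat.cast : ℕ → ℚ) h
  push_cast
  linarith
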